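/- Let Π be a Borel probability measure on [0,1] with E_{Θ~Π}[H_B(Θ)] > 0. Then there exist r ∈ (0, 1/2), b ∈ (0,1), and a finite ℓ₀ such that for all integers k ≥ ℓ₀, P(Γ_k ≤ (1-r)·k) > b. -/

import Mathlib

open MeasureTheory

/-- Binary entropy `H_B(p) = -p log₂ p - (1-p) log₂ (1-p)` (with `0 log 0 = 0`). -/
noncomputable def binEnt (p : ℝ) : ℝ :=
  -(p * Real.logb 2 p) - (1 - p) * Real.logb 2 (1 - p)

/-- Expectation of `g (Γ_k)` where `θ ~ μ` and, conditionally on `θ`, `Γ_k` is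
`Binomial(k-1, θ)` with probability `θ` and `Binomial(k-1, 1-θ)` with probability `1-θ`. -/
noncomputable def gammaExp (μ : Measure ℝ) (k : ℕ) (g : ℕ → ℝ) : ℝ :=
  ∫ θ, (θ * ∑ j ∈ Finset.range k,
          ((k - 1).choose j : ℝ) * θ ^ j * (1 - θ) ^ (k - 1 - j) * g j
      + (1 - θ) * ∑ j ∈ Finset.range k,
          ((k - 1).choose j : ℝ) * (1 - θ) ^ j * θ ^ (k - 1 - j) * g j) ∂μ


lemma sum_binom (n : ℕ) (x : ℝ) :
    ∑ j ∈ Finset.range (n+1), (n.choose j : ℝ) * x^j * (1-x)^(n-j) = 1 := by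
  have hx : x + (1-x) = 1 := by ring
  have h := add_pow x (1-x) n
  rw [hx, one_pow] at h
  conv_rhs => rw [h]
  exact Finset.sum_congr rfl fun j _ => by ring

lemma sum_binom_mean (n : ℕ) (x : ℝ) :
    ∑ j ∈ Finset.range (n+1), (j:ℝ) * ((n.choose j : ℝ) * x^j * (1-x)^(n-j)) = n * x := by
  cases n with
  | zero => simp
  | succ m =>
    rw [Finset.sum_range_succ']
    simp only [Nat.cast_zero, zero_mul, add_zero]
    have key : ∀ i ∈ Finset.range (m+1),
        ((i+1 : ℕ):ℝ) * (((m+1).choose (i+1) : ℝ) * x^(i+1) * (1-x)^(m+1-(i+1)))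
        = ((m:ℝ)+1) * x * ((m.choose i : ℝ) * x^i * (1-x)^(m-i)) := by
      intro i _
      have hc : ((m+1 : ℕ):ℝ) * (m.choose i : ℝ) = ((m+1).choose (i+1) : ℝ) * ((i+1 : ℕ):ℝ) := by
        exact_mod_cast congrArg (Nat.cast : ℕ → ℝ) (Nat.add_one_mul_choose_eq m i)
      have he : m+1-(i+1) = m - i := by omega
      rw [he]
      push_cast at hc ⊢
      linear_combination (x^(i+1)*(1-x)^(m-i)) * hc.symm
    rw [Finset.sum_congr rfl key]
    rw [← Finset.mul_sum, sum_binom m x]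
    push_cast
    ring

lemma sum_lb (n : ℕ) (x t : ℝ) (hx : 0 ≤ x) (hx1 : x ≤ 1) (ht : 0 < t) (g : ℕ → ℝ)
    (hg : ∀ j : ℕ, 1 - (j:ℝ)/t ≤ g j) :
    1 - (n:ℝ)*x/t ≤ ∑ j ∈ Finset.range (n+1), (n.choose j : ℝ) * x^j * (1-x)^(n-j) * g j := by
  have hp : ∀ j ∈ Finset.range (n+1), (0:ℝ) ≤ (n.choose j : ℝ) * x^j * (1-x)^(n-j) := by
    intro j _
    have : (0:ℝ) ≤ 1 - x := by linarith
    positivity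
  have key : ∑ j ∈ Finset.range (n+1),
      (n.choose j : ℝ) * x^j * (1-x)^(n-j) * (1 - (j:ℝ)/t) = 1 - (n:ℝ)*x/t := by
    have : ∀ j ∈ Finset.range (n+1),
        (n.choose j : ℝ) * x^j * (1-x)^(n-j) * (1 - (j:ℝ)/t)
        = (n.choose j : ℝ) * x^j * (1-x)^(n-j)
          - ((j:ℝ) * ((n.choose j : ℝ) * x^j * (1-x)^(n-j))) * t⁻¹ := by
      intro j _; field_simp
    rw [Finset.sum_congr rfl this, Finset.sum_sub_distrib, ← Finset.sum_mul,
      sum_binom n x, sum_binom_mean n x]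
    field_simp
  rw [← key]
  refine Finset.sum_le_sum fun j hj => ?_
  exact mul_le_mul_of_nonneg_left (hg j) (hp j hj)

lemma sum_ub (n : ℕ) (x : ℝ) (hx : 0 ≤ x) (hx1 : x ≤ 1) (g : ℕ → ℝ)
    (hg0 : ∀ j, 0 ≤ g j) (hg1 : ∀ j, g j ≤ 1) :
    0 ≤ (∑ j ∈ Finset.range (n+1), (n.choose j : ℝ) * x^j * (1-x)^(n-j) * g j)
    ∧ (∑ j ∈ Finset.range (n+1), (n.choose j : ℝ) * x^j * (1-x)^(n-j) * g j) ≤ 1 := by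
  have hp : ∀ j ∈ Finset.range (n+1), (0:ℝ) ≤ (n.choose j : ℝ) * x^j * (1-x)^(n-j) := by
    intro j _
    have : (0:ℝ) ≤ 1 - x := by linarith
    positivity
  constructor
  · exact Finset.sum_nonneg fun j hj => mul_nonneg (hp j hj) (hg0 j)
  · calc (∑ j ∈ Finset.range (n+1), (n.choose j : ℝ) * x^j * (1-x)^(n-j) * g j)
        ≤ ∑ j ∈ Finset.range (n+1), (n.choose j : ℝ) * x^j * (1-x)^(n-j) := by
          refine Finset.sum_le_sum fun j hj => ?_
          nlinarith [hp j hj, hg1 j]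
      _ = 1 := sum_binom n x

lemma pointwise (ε θ : ℝ) (hε : 0 < ε) (hε2 : ε ≤ 1/2) (hθl : ε ≤ θ) (hθr : θ ≤ 1 - ε)
    (n : ℕ) :
    ε*(1-ε)/(1-ε*(1-ε)) ≤
      θ * ∑ j ∈ Finset.range (n+1), ((n.choose j : ℝ) * θ^j * (1-θ)^(n-j) *
          (if (j:ℝ) ≤ (1-ε*(1-ε))*((n:ℝ)+1) then 1 else 0))
      + (1-θ) * ∑ j ∈ Finset.range (n+1), ((n.choose j : ℝ) * (1-θ)^j * θ^(n-j) *
          (if (j:ℝ) ≤ (1-ε*(1-ε))*((n:ℝ)+1) then 1 else 0)) := by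
  set δ := ε*(1-ε) with hδdef
  have hδ0 : 0 < δ := by have : 0 < 1 - ε := by linarith
                         exact mul_pos hε this
  have hδ4 : δ ≤ 1/4 := by nlinarith [sq_nonneg (ε - 1/2)]
  set t := (1-δ)*((n:ℝ)+1) with htdef
  have hn0 : (0:ℝ) ≤ (n:ℝ) := Nat.cast_nonneg n
  have ht : 0 < t := by
    apply mul_pos <;> [linarith; linarith]
  set g : ℕ → ℝ := fun j => if (j:ℝ) ≤ t then 1 else 0 with hgdef
  have hg : ∀ j : ℕ, 1 - (j:ℝ)/t ≤ g j := by
    intro j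
    simp only [hgdef]
    split
    · have : 0 ≤ (j:ℝ)/t := div_nonneg (Nat.cast_nonneg j) ht.le
      linarith
    · next h =>
      push_neg at h
      have : 1 ≤ (j:ℝ)/t := (le_div_iff₀ ht).2 (by linarith)
      linarith
  have hθ0 : 0 ≤ θ := by linarith
  have hθ1 : θ ≤ 1 := by linarith
  have h1 := sum_lb n θ t hθ0 hθ1 ht g hg
  have h2 := sum_lb n (1-θ) t (by linarith) (by linarith) ht g hg
  rw [sub_sub_cancel] at h2
  have c1 : θ * (1 - (n:ℝ)*θ/t) ≤ θ * ∑ j ∈ Finset.range (n+1),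
      (n.choose j : ℝ) * θ^j * (1-θ)^(n-j) * g j := mul_le_mul_of_nonneg_left h1 hθ0
  have c2 : (1-θ) * (1 - (n:ℝ)*(1-θ)/t) ≤ (1-θ) * ∑ j ∈ Finset.range (n+1),
      (n.choose j : ℝ) * (1-θ)^j * θ^(n-j) * g j :=
    mul_le_mul_of_nonneg_left h2 (by linarith)
  have hmean : δ/(1-δ) ≤ θ * (1 - (n:ℝ)*θ/t) + (1-θ) * (1 - (n:ℝ)*(1-θ)/t) := by
    have hθδ : δ ≤ θ*(1-θ) := by nlinarith [mul_nonneg (sub_nonneg.2 hθl) (sub_nonneg.2 hθr)]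
    have hA2 : θ^2 + (1-θ)^2 ≤ 1 - 2*δ := by nlinarith
    have hA0 : (0:ℝ) ≤ θ^2 + (1-θ)^2 := by positivity
    have expand : θ * (1 - (n:ℝ)*θ/t) + (1-θ) * (1 - (n:ℝ)*(1-θ)/t)
        = 1 - (n:ℝ)*(θ^2 + (1-θ)^2)/t := by
      field_simp
      ring
    rw [expand]
    have h3 : (n:ℝ)*(θ^2+(1-θ)^2)/t ≤ (1-2*δ)/(1-δ) := by
      rw [div_le_div_iff₀ ht (by linarith)]
      have hstep : (n:ℝ)*(θ^2+(1-θ)^2) ≤ ((n:ℝ)+1)*(1-2*δ) := by nlinarith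
      have h12δ : (0:ℝ) ≤ 1 - 2*δ := by linarith
      rw [htdef]
      nlinarith
    have h4 : δ/(1-δ) = 1 - (1-2*δ)/(1-δ) := by
      rw [eq_sub_iff_add_eq, ← add_div, div_eq_one_iff_eq (by linarith : (1:ℝ)-δ ≠ 0)]
      ring
    linarith
  calc δ/(1-δ) ≤ _ := hmean
    _ ≤ _ := add_le_add c1 c2

theorem stmt8 (μ : Measure ℝ) [IsProbabilityMeasure μ]
    (hsupp : μ (Set.Icc (0:ℝ) 1)ᶜ = 0)
    (hpos : 0 < ∫ θ, binEnt θ ∂μ) :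
    ∃ r ∈ Set.Ioo (0:ℝ) (1/2), ∃ b ∈ Set.Ioo (0:ℝ) 1, ∃ ℓ₀ : ℕ, 1 ≤ ℓ₀ ∧
      ∀ k : ℕ, ℓ₀ ≤ k →
        b < gammaExp μ k (fun j => if (j : ℝ) ≤ (1 - r) * (k : ℝ) then 1 else 0) := by
  have haeI : ∀ᵐ θ ∂μ, θ ∈ Set.Icc (0:ℝ) 1 := by
    rw [MeasureTheory.ae_iff]
    exact hsupp
  -- Step 1: find ε with positive mass on [ε, 1-ε]
  have key : ∃ N : ℕ, μ (Set.Icc (1/((N:ℝ)+2)) (1 - 1/((N:ℝ)+2))) ≠ 0 := by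
    by_contra h
    push_neg at h
    have hIoo : μ (Set.Ioo (0:ℝ) 1) = 0 := by
      have hsub : Set.Ioo (0:ℝ) 1 ⊆ ⋃ N : ℕ, Set.Icc (1/((N:ℝ)+2)) (1 - 1/((N:ℝ)+2)) := by
        intro θ hθ
        obtain ⟨hθ0, hθ1⟩ := hθ
        obtain ⟨N, hN⟩ := exists_nat_ge (max (1/θ) (1/(1-θ)))
        have hNθ : 1/θ ≤ (N:ℝ) := le_trans (le_max_left _ _) hN
        have hNθ' : 1/(1-θ) ≤ (N:ℝ) := le_trans (le_max_right _ _) hN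
        have h1θ : (0:ℝ) < 1 - θ := by linarith
        have e1 : 1 ≤ (N:ℝ) * θ := by
          have := (div_le_iff₀ hθ0).1 hNθ; linarith
        have e2 : 1 ≤ (N:ℝ) * (1-θ) := by
          have := (div_le_iff₀ h1θ).1 hNθ'; linarith
        refine Set.mem_iUnion.2 ⟨N, ?_, ?_⟩
        · rw [div_le_iff₀ (by positivity)]
          nlinarith
        · have : 1/((N:ℝ)+2) ≤ 1 - θ := by
            rw [div_le_iff₀ (by positivity)]
            nlinarith
          linarith
      exact measure_mono_null hsub (measure_iUnion_null h)
    have hae0 : ∀ᵐ θ ∂μ, binEnt θ = 0 := by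
      have h2 : ∀ᵐ θ ∂μ, θ ∉ Set.Ioo (0:ℝ) 1 := by
        rw [MeasureTheory.ae_iff]
        simp only [not_not]
        exact hIoo
      filter_upwards [haeI, h2] with θ hI hN
      have : θ = 0 ∨ θ = 1 := by
        rcases hI with ⟨h0, h1⟩
        rcases eq_or_lt_of_le h0 with h | h
        · exact Or.inl h.symm
        rcases eq_or_lt_of_le h1 with h' | h'
        · exact Or.inr h'
        exact absurd ⟨h, h'⟩ hN
      rcases this with rfl | rfl <;> simp [binEnt]
    have : ∫ θ, binEnt θ ∂μ = 0 := by
      rw [integral_congr_ae hae0, integral_zero]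
    linarith
  obtain ⟨N, hN⟩ := key
  set ε : ℝ := 1/((N:ℝ)+2) with hεdef
  have hε : 0 < ε := by positivity
  have hε2 : ε ≤ 1/2 := by
    rw [hεdef, div_le_div_iff₀ (by positivity) (by norm_num)]
    have : (0:ℝ) ≤ (N:ℝ) := Nat.cast_nonneg N
    linarith
  set A : Set ℝ := Set.Icc ε (1-ε) with hAdef
  have hAm : MeasurableSet A := measurableSet_Icc
  set c : ℝ := (μ A).toReal with hcdef
  have hc0 : 0 < c := ENNReal.toReal_pos hN (measure_ne_top μ A)
  have hc1 : c ≤ 1 := by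
    rw [hcdef]
    have : μ A ≤ 1 := prob_le_one
    refine ENNReal.toReal_le_of_le_ofReal one_pos.le ?_
    simpa using prob_le_one
  set δ : ℝ := ε*(1-ε) with hδdef
  have hδ0 : 0 < δ := mul_pos hε (by linarith)
  have hδ4 : δ ≤ 1/4 := by nlinarith [sq_nonneg (ε - 1/2)]
  set m : ℝ := δ/(1-δ) with hmdef
  have hm0 : 0 < m := div_pos hδ0 (by linarith)
  have hm3 : m ≤ 1/3 := by
    rw [hmdef, div_le_iff₀ (by linarith)]
    linarith
  refine ⟨δ, ⟨hδ0, by linarith⟩, m*c/2, ⟨by positivity, by nlinarith⟩, 1, le_refl 1, ?_⟩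
  intro k hk
  obtain ⟨n, rfl⟩ : ∃ n, k = n + 1 := ⟨k - 1, (Nat.succ_pred_eq_of_pos hk).symm⟩
  set g : ℕ → ℝ := fun j => if (j : ℝ) ≤ (1 - δ) * ((n+1 : ℕ) : ℝ) then 1 else 0 with hgdef
  have hg0 : ∀ j, 0 ≤ g j := by intro j; rw [hgdef]; dsimp only; split <;> norm_num
  have hg1 : ∀ j, g j ≤ 1 := by intro j; rw [hgdef]; dsimp only; split <;> norm_num
  set f : ℝ → ℝ := fun θ =>
      θ * ∑ j ∈ Finset.range (n+1), ((n+1-1 : ℕ).choose j : ℝ) * θ ^ j * (1 - θ) ^ (n+1-1 - j) * g j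
      + (1 - θ) * ∑ j ∈ Finset.range (n+1),
          ((n+1-1 : ℕ).choose j : ℝ) * (1 - θ) ^ j * θ ^ (n+1-1 - j) * g j with hfdef
  have hsimp : ∀ θ : ℝ, f θ =
      θ * ∑ j ∈ Finset.range (n+1), ((n : ℕ).choose j : ℝ) * θ ^ j * (1 - θ) ^ (n - j) * g j
      + (1 - θ) * ∑ j ∈ Finset.range (n+1),
          ((n : ℕ).choose j : ℝ) * (1 - θ) ^ j * θ ^ (n - j) * g j := by
    intro θ; rw [hfdef]; simp
  have hfcont : Continuous f := by
    rw [hfdef]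
    refine Continuous.add (continuous_id.mul ?_) ((continuous_const.sub continuous_id).mul ?_) <;>
    · refine continuous_finset_sum _ fun j _ => ?_
      fun_prop
  have hbound : ∀ θ ∈ Set.Icc (0:ℝ) 1, 0 ≤ f θ ∧ f θ ≤ 2 := by
    intro θ hθ
    obtain ⟨h0, h1⟩ := hθ
    rw [hsimp θ]
    obtain ⟨u1, u2⟩ := sum_ub n θ h0 h1 g hg0 hg1
    obtain ⟨v1, v2⟩ := sum_ub n (1-θ) (by linarith) (by linarith) g hg0 hg1
    rw [sub_sub_cancel] at v1 v2
    constructor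
    · have := mul_nonneg h0 u1
      have := mul_nonneg (by linarith : (0:ℝ) ≤ 1 - θ) v1
      linarith
    · nlinarith
  have hint : Integrable f μ := by
    refine Integrable.mono' (integrable_const 2) hfcont.aestronglyMeasurable ?_
    filter_upwards [haeI] with θ hθ
    rw [Real.norm_eq_abs, abs_le]
    obtain ⟨l, u⟩ := hbound θ hθ
    exact ⟨by linarith, u⟩
  set φ : ℝ → ℝ := A.indicator (fun _ => m) with hφdef
  have hφint : Integrable φ μ := (integrable_const m).indicator hAm
  have hle : ∀ᵐ θ ∂μ, φ θ ≤ f θ := by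
    filter_upwards [haeI] with θ hθ
    rw [hφdef]
    by_cases hmem : θ ∈ A
    · rw [Set.indicator_of_mem hmem]
      obtain ⟨hθl, hθr⟩ := hmem
      have := pointwise ε θ hε hε2 hθl hθr n
      rw [hsimp θ]
      rw [hmdef, hδdef]
      convert this using 4 <;>
      · rw [hgdef, hδdef]
        push_cast
        ring_nf
    · rw [Set.indicator_of_notMem hmem]
      exact (hbound θ hθ).1
  have hIφ : ∫ θ, φ θ ∂μ = c * m := by
    rw [hφdef, integral_indicator_const m hAm]
    simp [hcdef, smul_eq_mul, Measure.real]
  have hmono : ∫ θ, φ θ ∂μ ≤ ∫ θ, f θ ∂μ := integral_mono_ae hφint hint hle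
  have : m * c / 2 < c * m := by nlinarith
  have hfinal : m * c / 2 < ∫ θ, f θ ∂μ := by
    rw [hIφ] at hmono; linarith
  calc m * c / 2 < ∫ θ, f θ ∂μ := hfinal
    _ = gammaExp μ (n+1) g := rfl
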